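/- arXiv:1208.2133 — 4 statements merged into one kernel-verified Lean document; each statement's English description precedes it below -/
import Mathlib

section
/- For a map f : X → Y between metric spaces with X separable, the set S_f = {x ∈ X : Lip f(x) < ∞} is a countable union of closed sets C_k on each of which f restricted to C_k is Lipschitz. Here Lip f(x) = limsup_{r→0} sup_{y ∈ B(x,r)} d_Y(f(x),f(y))/r. -/
open Filter Metric Set Topology
open scoped ENNReal NNReal

/-- The upper local Lipschitz constant
`Lip f (x) = limsup_{r→0⁺} sup_{y ∈ B(x,r)} d(f x, f y) / r`, valued in `[0,∞]`. -/
noncomputable def upperLip {X Y : Type*} [MetricSpace X] [MetricSpace Y]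
    (f : X → Y) (x : X) : ℝ≥0∞ :=
  limsup (fun r : ℝ => (⨆ y ∈ ball x r, edist (f x) (f y)) / ENNReal.ofReal r)
    (nhdsWithin 0 (Ioi 0))

/-- For `f : X → Y` with `X` separable, the set `S_f = {x : Lip f x < ∞}` is a countable
union of closed sets on each of which `f` is Lipschitz. -/
theorem stmt_2 {X Y : Type*} [MetricSpace X] [MetricSpace Y]
    [TopologicalSpace.SeparableSpace X] (f : X → Y) :
    ∃ C : ℕ → Set X, (∀ k, IsClosed (C k)) ∧
      (∀ k, ∃ K : ℝ≥0, LipschitzOnWith K f (C k)) ∧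
      {x | upperLip f x < ⊤} = ⋃ k, C k := by
  rcases isEmpty_or_nonempty X with hX | hX
  · refine ⟨fun _ => ∅, fun _ => isClosed_empty,
      fun _ => ⟨0, by simp [LipschitzOnWith]⟩, ?_⟩
    have h1 : {x | upperLip f x < ⊤} = (∅ : Set X) := Set.eq_empty_of_isEmpty _
    simp [h1]
  have hu := TopologicalSpace.denseRange_denseSeq X
  set u := TopologicalSpace.denseSeq X with hudef
  set A : ℕ → ℕ → Set X := fun n m =>
    {x | ∀ y, dist x y < 1/((m:ℝ)+1) → dist (f x) (f y) ≤ n * dist x y} with hA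
  have hpos : ∀ m : ℕ, (0:ℝ) < 1/((m:ℝ)+1) := fun m => by positivity
  -- closedness
  have hAclosed : ∀ n m, IsClosed (A n m) := by
    intro n m
    apply IsSeqClosed.isClosed
    intro v x hv hvx y hy
    have hdx : Tendsto (fun k => dist (v k) x) atTop (𝓝 0) := by
      simpa using hvx.dist (tendsto_const_nhds : Tendsto (fun _ : ℕ => x) atTop (𝓝 x))
    have hdy : Tendsto (fun k => dist (v k) y) atTop (𝓝 (dist x y)) :=
      hvx.dist tendsto_const_nhds
    have h1 : ∀ᶠ k in atTop, dist (v k) y < 1/((m:ℝ)+1) :=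
      hdy.eventually_lt_const hy
    have h2 : ∀ᶠ k in atTop, dist (v k) x < 1/((m:ℝ)+1) :=
      hdx.eventually_lt_const (hpos m)
    have hev : ∀ᶠ k in atTop,
        dist (f x) (f y) ≤ n * dist (v k) x + n * dist (v k) y := by
      filter_upwards [h1, h2] with k hk1 hk2
      calc dist (f x) (f y) ≤ dist (f x) (f (v k)) + dist (f (v k)) (f y) := dist_triangle _ _ _
        _ ≤ n * dist (v k) x + n * dist (v k) y := by
            refine add_le_add ?_ (hv k y hk1)
            rw [dist_comm]
            exact (hv k x hk2).trans (by rw [dist_comm])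
    have hlim : Tendsto (fun k => n * dist (v k) x + n * dist (v k) y) atTop
        (𝓝 (n * dist x y)) := by
      have := (hdx.const_mul (n:ℝ)).add (hdy.const_mul (n:ℝ))
      simpa using this
    exact ge_of_tendsto hlim hev
  -- Lipschitz on pieces
  have hAlip : ∀ (n m i : ℕ),
      LipschitzOnWith (n : ℝ≥0) f (A n m ∩ closedBall (u i) (1/(3*((m:ℝ)+1)))) := by
    intro n m i
    apply LipschitzOnWith.of_dist_le_mul
    rintro x ⟨hxA, hxB⟩ y ⟨_, hyB⟩
    have hxy : dist x y < 1/((m:ℝ)+1) := by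
      have := dist_triangle x (u i) y
      rw [mem_closedBall] at hxB hyB
      rw [dist_comm] at hyB
      have h3 : (1:ℝ)/(3*((m:ℝ)+1)) + 1/(3*((m:ℝ)+1)) < 1/((m:ℝ)+1) := by
        rw [← add_div, div_lt_div_iff₀ (by positivity) (by positivity)]
        ring_nf
        nlinarith [Nat.cast_nonneg (α := ℝ) m]
      calc dist x y ≤ dist x (u i) + dist (u i) y := this
        _ ≤ 1/(3*((m:ℝ)+1)) + 1/(3*((m:ℝ)+1)) := add_le_add hxB hyB
        _ < 1/((m:ℝ)+1) := h3
    simpa using hxA y hxy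
  -- A n m ⊆ S_f
  have hAsub : ∀ n m, A n m ⊆ {x | upperLip f x < ⊤} := by
    intro n m x hx
    have hev : ∀ᶠ r in 𝓝[>] (0:ℝ),
        (⨆ y ∈ ball x r, edist (f x) (f y)) / ENNReal.ofReal r ≤ (n : ℝ≥0∞) := by
      filter_upwards [Ioo_mem_nhdsGT_of_mem
        (left_mem_Ico.mpr (hpos m))] with r hr
      have hsup : (⨆ y ∈ ball x r, edist (f x) (f y)) ≤ ENNReal.ofReal ((n:ℝ) * r) := by
        refine iSup₂_le fun y hy => ?_
        rw [mem_ball] at hy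
        have hxy : dist x y < 1/((m:ℝ)+1) := by rw [dist_comm]; exact hy.trans hr.2
        rw [edist_dist]
        apply ENNReal.ofReal_le_ofReal
        exact (hx y hxy).trans (by
          have : dist x y ≤ r := by rw [dist_comm]; exact hy.le
          nlinarith [Nat.cast_nonneg (α := ℝ) n])
      calc (⨆ y ∈ ball x r, edist (f x) (f y)) / ENNReal.ofReal r
          ≤ ENNReal.ofReal ((n:ℝ) * r) / ENNReal.ofReal r :=
            ENNReal.div_le_div_right hsup _
        _ = (n : ℝ≥0∞) := by
            rw [ENNReal.ofReal_mul (by positivity), mul_div_assoc,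
              ENNReal.div_self (ENNReal.ofReal_pos.mpr hr.1).ne' ENNReal.ofReal_ne_top,
              mul_one, ENNReal.ofReal_natCast]
    have : upperLip f x ≤ (n : ℝ≥0∞) := limsup_le_of_le (by isBoundedDefault) hev
    exact lt_of_le_of_lt this (by simp)
  -- the covering
  have hcover : {x | upperLip f x < ⊤} ⊆
      ⋃ n, ⋃ m, ⋃ i, A n m ∩ closedBall (u i) (1/(3*((m:ℝ)+1))) := by
    intro x hx
    have hLne : upperLip f x ≠ ⊤ := (lt_top_iff_ne_top.mp hx)
    set c : ℝ≥0∞ := upperLip f x + 1 with hc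
    have hcne : c ≠ ⊤ := by
      simp [hc, ENNReal.add_ne_top, hLne]
    have hlt : upperLip f x < c := ENNReal.lt_add_right hLne one_ne_zero
    have hev := eventually_lt_of_limsup_lt hlt
    rw [eventually_nhdsWithin_iff] at hev
    rcases Metric.eventually_nhds_iff.mp hev with ⟨δ, hδ, hδ'⟩
    obtain ⟨n, hn⟩ := exists_nat_gt c.toReal
    obtain ⟨m, hm⟩ := exists_nat_one_div_lt hδ
    obtain ⟨i, hi⟩ := hu.exists_dist_lt x (by positivity : (0:ℝ) < 1/(3*((m:ℝ)+1)))
    refine mem_iUnion.mpr ⟨n, mem_iUnion.mpr ⟨m, mem_iUnion.mpr ⟨i, ?_, hi.le⟩⟩⟩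
    -- show x ∈ A n m
    intro y hy
    set d := dist x y with hd
    have hd0 : 0 ≤ d := dist_nonneg
    have hdδ : d < δ := lt_trans hy hm
    -- key estimate for r ∈ Ioo d δ
    have key : ∀ r ∈ Ioo d δ, edist (f x) (f y) ≤ c * ENNReal.ofReal r := by
      intro r hr
      have hr0 : 0 < r := lt_of_le_of_lt hd0 hr.1
      have hFr : (⨆ z ∈ ball x r, edist (f x) (f z)) / ENNReal.ofReal r < c := by
        apply hδ'
        · rw [Real.dist_eq, sub_zero, abs_of_pos hr0]; exact hr.2
        · exact hr0
      have hle : (⨆ z ∈ ball x r, edist (f x) (f z)) ≤ c * ENNReal.ofReal r :=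
        (ENNReal.div_le_iff_le_mul (Or.inl (ENNReal.ofReal_pos.mpr hr0).ne')
          (Or.inl ENNReal.ofReal_ne_top)).mp hFr.le
      refine le_trans ?_ hle
      have hyb : y ∈ ball x r := by rw [mem_ball, dist_comm]; exact hr.1
      exact le_iSup₂ (f := fun z (_ : z ∈ ball x r) => edist (f x) (f z)) y hyb
    -- pass to the limit r → d⁺
    have hlim : Tendsto (fun r => c * ENNReal.ofReal r) (𝓝[>] d)
        (𝓝 (c * ENNReal.ofReal d)) := by
      refine ENNReal.Tendsto.const_mul ?_ (Or.inr hcne)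
      exact (ENNReal.continuous_ofReal.tendsto d).mono_left nhdsWithin_le_nhds
    have hedist : edist (f x) (f y) ≤ c * ENNReal.ofReal d := by
      refine ge_of_tendsto hlim ?_
      filter_upwards [Ioo_mem_nhdsGT_of_mem (left_mem_Ico.mpr hdδ)] with r hr
      exact key r hr
    -- convert to dist
    have hcn : c ≤ ENNReal.ofReal (n:ℝ) := by
      conv_lhs => rw [← ENNReal.ofReal_toReal hcne]
      exact ENNReal.ofReal_le_ofReal hn.le
    have : edist (f x) (f y) ≤ ENNReal.ofReal ((n:ℝ) * d) := by
      refine hedist.trans ?_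
      rw [ENNReal.ofReal_mul (by positivity)]
      exact mul_le_mul_left hcn _
    rw [edist_dist] at this
    exact (ENNReal.ofReal_le_ofReal_iff (by positivity)).mp this
  -- assemble
  refine ⟨fun k =>
      A (Denumerable.ofNat (ℕ × ℕ × ℕ) k).1 (Denumerable.ofNat (ℕ × ℕ × ℕ) k).2.1 ∩
        closedBall (u (Denumerable.ofNat (ℕ × ℕ × ℕ) k).2.2)
          (1/(3*(((Denumerable.ofNat (ℕ × ℕ × ℕ) k).2.1 : ℝ)+1))), ?_, ?_, ?_⟩
  · intro k
    exact (hAclosed _ _).inter isClosed_closedBall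
  · intro k
    exact ⟨_, hAlip _ _ _⟩
  · apply Subset.antisymm
    · intro x hx
      rcases mem_iUnion.mp (hcover hx) with ⟨n, h1⟩
      rcases mem_iUnion.mp h1 with ⟨m, h2⟩
      rcases mem_iUnion.mp h2 with ⟨i, h3⟩
      refine mem_iUnion.mpr ⟨Encodable.encode (n, m, i), ?_⟩
      simpa [Denumerable.ofNat_encode] using h3
    · refine iUnion_subset fun k => ?_
      exact (inter_subset_left).trans (hAsub _ _)
end

section
/- Let X be a metric measure space, Y a metric space, and f : X → Y continuous. Suppose g : X → [0,∞] satisfies d_Y(f(x),f(y)) ≤ d_X(x,y)(g(x)+g(y)) for all x,y ∈ X. Then 4g is an upper gradient of f: for every rectifiable curve γ : [0,L] → X parameterized by arc length, d_Y(f(γ(0)), f(γ(L))) ≤ 4∫_γ g ds. -/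
open Set MeasureTheory
open scoped ENNReal

/-- A mean value point: on a set of finite positive measure, one can find a point where
`h` is at most its average, up to an arbitrarily small error `ε`. -/
lemma exists_le_avg_aux (h : ℝ → ℝ≥0∞) (s : Set ℝ) (hms : MeasurableSet s)
    (hs0 : volume s ≠ 0) (hsfin : volume s ≠ ⊤) (hint : (∫⁻ x in s, h x) ≠ ⊤)
    {ε : ℝ≥0∞} (hε : ε ≠ 0) :
    ∃ x ∈ s, h x * volume s ≤ (∫⁻ x in s, h x) + ε := by
  by_contra hcon
  push_neg at hcon
  have key : ∀ x ∈ s, ((∫⁻ y in s, h y) + ε) / volume s ≤ h x := by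
    intro x hx
    rw [ENNReal.div_le_iff hs0 hsfin]
    exact (hcon x hx).le
  have h1 : ((∫⁻ y in s, h y) + ε) / volume s * volume s ≤ ∫⁻ x in s, h x := by
    calc ((∫⁻ y in s, h y) + ε) / volume s * volume s
        = ∫⁻ _ in s, ((∫⁻ y in s, h y) + ε) / volume s := by
          rw [setLIntegral_const]
      _ ≤ ∫⁻ x in s, h x := setLIntegral_mono' hms key
  rw [ENNReal.div_mul_cancel hs0 hsfin] at h1
  exact absurd h1 (not_le.mpr (ENNReal.lt_add_right hint hε))

/-- Splitting an integral over a uniform partition of `Ico 0 (n*c)`. -/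
lemma sum_lintegral_Ico_aux (h : ℝ → ℝ≥0∞) {c : ℝ} (hc : 0 ≤ c) (n : ℕ) :
    ∑ k ∈ Finset.range n, ∫⁻ u in Ico ((k : ℝ) * c) (((k : ℝ) + 1) * c), h u
      = ∫⁻ u in Ico 0 ((n : ℝ) * c), h u := by
  induction n with
  | zero => simp
  | succ m ih =>
    rw [Finset.sum_range_succ, ih]
    have h1 : (0 : ℝ) ≤ (m : ℝ) * c := by positivity
    have h2 : (m : ℝ) * c ≤ ((m : ℝ) + 1) * c := by nlinarith
    have hU : Ico (0 : ℝ) (((m : ℕ) + 1 : ℕ) * c)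
        = Ico (0 : ℝ) ((m : ℝ) * c) ∪ Ico ((m : ℝ) * c) (((m : ℝ) + 1) * c) := by
      rw [Ico_union_Ico_eq_Ico h1 h2]
      norm_num
    rw [hU, Measure.restrict_union (Set.Ico_disjoint_Ico_same) measurableSet_Ico,
      lintegral_add_measure]

/-- If `f : X → Y` is continuous and `g : X → [0,∞]` is Borel with
`d(f x, f y) ≤ d(x,y)(g x + g y)` for all `x, y`, then `4g` is an upper gradient of `f`:
for every rectifiable curve `γ` parameterized by arc length on `[0, L]`,
`d(f (γ 0), f (γ L)) ≤ 4 ∫_γ g ds`. -/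
theorem stmt_6 {X Y : Type*} [MetricSpace X] [MetricSpace Y]
    [MeasurableSpace X] [BorelSpace X]
    (f : X → Y) (hf : Continuous f) (g : X → ℝ≥0∞) (hg : Measurable g)
    (hfg : ∀ x y : X, edist (f x) (f y) ≤ edist x y * (g x + g y))
    (L : ℝ) (hL : 0 ≤ L) (γ : ℝ → X)
    (hγ : ∀ s ∈ Icc 0 L, ∀ t ∈ Icc 0 L, dist (γ s) (γ t) ≤ |s - t|) :
    edist (f (γ 0)) (f (γ L)) ≤ 4 * ∫⁻ t in Icc 0 L, g (γ t) := by
  rcases eq_or_lt_of_le hL with rfl | hLpos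
  · simp
  set I := ∫⁻ t in Icc 0 L, g (γ t) with hIdef
  rcases eq_or_ne I ⊤ with hItop | hItop
  · rw [hItop]
    simp
  -- it suffices to prove the bound up to an arbitrary ε > 0
  refine ENNReal.le_of_forall_pos_le_add fun ε hε _ => ?_
  set η : ℝ≥0∞ := (ε : ℝ≥0∞) / 3 with hηdef
  have hη0 : η ≠ 0 := by
    simp [hηdef, ENNReal.div_eq_zero_iff]
    exact_mod_cast hε.ne'
  have hηtop : η ≠ ⊤ := by
    exact (ENNReal.div_lt_top ENNReal.coe_ne_top (by norm_num)).ne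
  have hηpos : (0 : ℝ) < η.toReal := ENNReal.toReal_pos hη0 hηtop
  -- continuity of f at γ 0 and γ L
  have hcont0 := Metric.continuousAt_iff.mp (hf.continuousAt (x := γ 0)) η.toReal hηpos
  obtain ⟨δ0, hδ0, hδ0'⟩ := hcont0
  have hcontL := Metric.continuousAt_iff.mp (hf.continuousAt (x := γ L)) η.toReal hηpos
  obtain ⟨δL, hδL, hδL'⟩ := hcontL
  set δ : ℝ := min δ0 δL with hδdef
  have hδpos : 0 < δ := lt_min hδ0 hδL
  -- choose n with L / n < δ
  obtain ⟨n, hn⟩ := exists_nat_gt (L / δ)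
  have hnpos : 0 < n := by
    have : (0 : ℝ) < L / δ := div_pos hLpos hδpos
    exact_mod_cast Nat.pos_of_ne_zero (by rintro rfl; simp at hn; linarith)
  have hnR : (0 : ℝ) < n := by exact_mod_cast hnpos
  set c : ℝ := L / n with hcdef
  have hcpos : 0 < c := div_pos hLpos hnR
  have hcδ : c < δ := by
    rw [hcdef, div_lt_iff₀ hnR]
    calc L = (L / δ) * δ := by field_simp
      _ < n * δ := by exact mul_lt_mul_of_pos_right hn hδpos
      _ = δ * n := mul_comm _ _
  have hncL : (n : ℝ) * c = L := by
    rw [hcdef]; field_simp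
  -- choose good points on each subinterval
  set εA : ℝ≥0∞ := (η / 4) / n with hεAdef
  have hεA0 : εA ≠ 0 := by
    simp only [hεAdef, ne_eq, ENNReal.div_eq_zero_iff]
    push_neg
    constructor
    · constructor
      · simp [hη0]
      · exact ENNReal.natCast_ne_top 4
    · exact ENNReal.natCast_ne_top n
  have hsub : ∀ k : ℕ, k < n → Ico ((k : ℝ) * c) (((k : ℝ) + 1) * c) ⊆ Icc 0 L := by
    intro k hk x hx
    constructor
    · have : (0 : ℝ) ≤ (k : ℝ) * c := by positivity
      linarith [hx.1]
    · have hk1 : ((k : ℝ) + 1) ≤ (n : ℝ) := by exact_mod_cast hk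
      have : ((k : ℝ) + 1) * c ≤ (n : ℝ) * c := by nlinarith
      have := hx.2
      linarith [hncL]
  have hIk_fin : ∀ k : ℕ, k < n →
      (∫⁻ u in Ico ((k : ℝ) * c) (((k : ℝ) + 1) * c), g (γ u)) ≠ ⊤ := by
    intro k hk
    refine ne_top_of_le_ne_top hItop ?_
    exact lintegral_mono_set (hsub k hk)
  have hvol : ∀ k : ℕ, volume (Ico ((k : ℝ) * c) (((k : ℝ) + 1) * c)) = ENNReal.ofReal c := by
    intro k
    rw [Real.volume_Ico]
    congr 1
    ring
  have hpoint : ∀ k : ℕ, ∃ x : ℝ, k < n →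
      x ∈ Ico ((k : ℝ) * c) (((k : ℝ) + 1) * c) ∧
      g (γ x) * ENNReal.ofReal c ≤ (∫⁻ u in Ico ((k : ℝ) * c) (((k : ℝ) + 1) * c), g (γ u)) + εA := by
    intro k
    by_cases hk : k < n
    · obtain ⟨x, hx1, hx2⟩ := exists_le_avg_aux (fun u => g (γ u))
        (Ico ((k : ℝ) * c) (((k : ℝ) + 1) * c)) measurableSet_Ico
        (by rw [hvol k]; simp [ENNReal.ofReal_eq_zero]; linarith)
        (by rw [hvol k]; exact ENNReal.ofReal_ne_top)
        (hIk_fin k hk) hεA0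
      exact ⟨x, fun _ => ⟨hx1, by rwa [hvol k] at hx2⟩⟩
    · exact ⟨0, fun h => absurd h hk⟩
  choose t ht using hpoint
  have htmem : ∀ k : ℕ, k < n → t k ∈ Ico ((k : ℝ) * c) (((k : ℝ) + 1) * c) :=
    fun k hk => (ht k hk).1
  have htIcc : ∀ k : ℕ, k < n → t k ∈ Icc 0 L := fun k hk => hsub k hk (htmem k hk)
  -- the key sum bound
  set S : ℝ≥0∞ := ∑ k ∈ Finset.range n, ENNReal.ofReal c * g (γ (t k)) with hSdef
  have hS : S ≤ I + η / 4 := by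
    calc S ≤ ∑ k ∈ Finset.range n,
          ((∫⁻ u in Ico ((k : ℝ) * c) (((k : ℝ) + 1) * c), g (γ u)) + εA) := by
          refine Finset.sum_le_sum fun k hk => ?_
          rw [mul_comm]
          exact (ht k (Finset.mem_range.mp hk)).2
      _ = (∑ k ∈ Finset.range n, ∫⁻ u in Ico ((k : ℝ) * c) (((k : ℝ) + 1) * c), g (γ u))
          + n * εA := by
          rw [Finset.sum_add_distrib, Finset.sum_const, Finset.card_range, nsmul_eq_mul]
      _ = (∫⁻ u in Ico 0 ((n : ℝ) * c), g (γ u)) + n * εA := by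
          rw [sum_lintegral_Ico_aux _ hcpos.le]
      _ ≤ I + η / 4 := by
          gcongr
          · rw [hncL, hIdef]
            exact lintegral_mono_set Ico_subset_Icc_self
          · rw [hεAdef, ENNReal.mul_div_cancel (by exact_mod_cast hnpos.ne') (ENNReal.natCast_ne_top n)]
  -- telescoping bound for the middle part
  have hmid : edist (f (γ (t 0))) (f (γ (t (n - 1)))) ≤ 4 * S := by
    calc edist (f (γ (t 0))) (f (γ (t (n - 1))))
        ≤ ∑ i ∈ Finset.range (n - 1), edist (f (γ (t i))) (f (γ (t (i + 1)))) :=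
          edist_le_range_sum_edist (fun i => f (γ (t i))) (n - 1)
      _ ≤ ∑ i ∈ Finset.range (n - 1),
          (2 * (ENNReal.ofReal c * g (γ (t i))) + 2 * (ENNReal.ofReal c * g (γ (t (i + 1))))) := by
          refine Finset.sum_le_sum fun i hi => ?_
          have hi' : i < n - 1 := Finset.mem_range.mp hi
          have hin : i < n := by omega
          have hin1 : i + 1 < n := by omega
      -- distance between consecutive points is at most 2c
          have hdist : edist (γ (t i)) (γ (t (i + 1))) ≤ ENNReal.ofReal (2 * c) := by
            rw [edist_dist]
            apply ENNReal.ofReal_le_ofReal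
            refine le_trans (hγ _ (htIcc i hin) _ (htIcc (i + 1) hin1)) ?_
            have h1 := htmem i hin
            have h2 := htmem (i + 1) hin1
            simp only [mem_Ico] at h1 h2
            rw [abs_le]
            push_cast at h1 h2 ⊢
            constructor <;> nlinarith [h1.1, h1.2, h2.1, h2.2]
          calc edist (f (γ (t i))) (f (γ (t (i + 1))))
              ≤ edist (γ (t i)) (γ (t (i + 1))) * (g (γ (t i)) + g (γ (t (i + 1)))) :=
                hfg _ _
            _ ≤ ENNReal.ofReal (2 * c) * (g (γ (t i)) + g (γ (t (i + 1)))) := by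
                gcongr
            _ = 2 * (ENNReal.ofReal c * g (γ (t i))) + 2 * (ENNReal.ofReal c * g (γ (t (i + 1)))) := by
                rw [ENNReal.ofReal_mul (by norm_num)]
                rw [mul_add]
                norm_num
                ring
      _ = 2 * (∑ i ∈ Finset.range (n - 1), ENNReal.ofReal c * g (γ (t i)))
          + 2 * (∑ i ∈ Finset.range (n - 1), ENNReal.ofReal c * g (γ (t (i + 1)))) := by
          rw [Finset.sum_add_distrib, Finset.mul_sum, Finset.mul_sum]
      _ ≤ 2 * S + 2 * S := by
          gcongr 2 * ?_ + 2 * ?_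
          · exact Finset.sum_le_sum_of_subset (Finset.range_subset_range.mpr (by omega))
          · have : ∑ i ∈ Finset.range (n - 1), ENNReal.ofReal c * g (γ (t (i + 1)))
                = ∑ i ∈ Finset.Ico 1 n, ENNReal.ofReal c * g (γ (t i)) := by
              rw [Finset.sum_Ico_eq_sum_range]
              exact Finset.sum_congr rfl fun i _ => by rw [add_comm]
            rw [this, hSdef, Finset.range_eq_Ico]
            exact Finset.sum_le_sum_of_subset (Finset.Ico_subset_Ico (by omega) le_rfl)
      _ = 4 * S := by ring
  -- endpoint bounds
  have hend0 : edist (f (γ 0)) (f (γ (t 0))) ≤ η := by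
    have h0 := htmem 0 hnpos
    simp only [mem_Ico, Nat.cast_zero, zero_mul, zero_add, one_mul] at h0
    have hdx : dist (γ (t 0)) (γ 0) < δ0 := by
      refine lt_of_le_of_lt (hγ _ (htIcc 0 hnpos) 0 ⟨le_rfl, hL⟩) ?_
      rw [sub_zero, abs_of_nonneg h0.1]
      exact lt_of_lt_of_le (lt_of_lt_of_le h0.2 (le_of_eq rfl)) (le_of_lt (lt_of_lt_of_le hcδ (min_le_left _ _)))
    have := hδ0' hdx
    rw [edist_comm, edist_dist]
    exact le_trans (ENNReal.ofReal_le_ofReal this.le) (by rw [ENNReal.ofReal_toReal hηtop])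
  have hendL : edist (f (γ (t (n - 1)))) (f (γ L)) ≤ η := by
    have hn1 : n - 1 < n := by omega
    have h0 := htmem (n - 1) hn1
    simp only [mem_Ico] at h0
    have hcast : ((n - 1 : ℕ) : ℝ) = (n : ℝ) - 1 := by
      push_cast [Nat.cast_sub hnpos]
      ring
    have hdx : dist (γ (t (n - 1))) (γ L) < δL := by
      refine lt_of_le_of_lt (hγ _ (htIcc (n - 1) hn1) L ⟨hL, le_rfl⟩) ?_
      have hl : ((n : ℝ) - 1) * c ≤ t (n - 1) := by rw [← hcast]; exact h0.1
      have hu : t (n - 1) < L := by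
        have := h0.2
        rw [hcast] at this
        calc t (n - 1) < ((n : ℝ) - 1 + 1) * c := this
          _ = (n : ℝ) * c := by ring
          _ = L := hncL
      rw [abs_of_nonpos (by linarith)]
      have : L - t (n - 1) ≤ c := by nlinarith [hncL]
      calc -(t (n - 1) - L) = L - t (n - 1) := by ring
        _ ≤ c := this
        _ < δ := hcδ
        _ ≤ δL := min_le_right _ _
    have := hδL' hdx
    rw [edist_dist]
    exact le_trans (ENNReal.ofReal_le_ofReal this.le) (by rw [ENNReal.ofReal_toReal hηtop])
  -- combine
  calc edist (f (γ 0)) (f (γ L))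
      ≤ edist (f (γ 0)) (f (γ (t 0))) + edist (f (γ (t 0))) (f (γ (t (n - 1))))
        + edist (f (γ (t (n - 1)))) (f (γ L)) := edist_triangle4 _ _ _ _
    _ ≤ η + 4 * S + η := by gcongr
    _ ≤ η + 4 * (I + η / 4) + η := by gcongr
    _ = 4 * I + (η + η + η) := by
        rw [mul_add, ENNReal.mul_div_cancel (by norm_num) (by norm_num)]
        ring
    _ = 4 * I + ε := by rw [hηdef, ENNReal.add_thirds]
end

section
/- If f : X → Y is locally Lipschitz between metric spaces, then the lower local Lipschitz constant lip f(x) = liminf_{r→0} sup_{y∈B(x,r)} d_Y(f(x),f(y))/r is an upper gradient of f. -/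
open Filter Metric Set MeasureTheory
open scoped ENNReal NNReal

open scoped Topology

/-- A locally Lipschitz function on `ℝ` is Lipschitz on any compact interval. -/
lemma aux_locLip {Y : Type*} [MetricSpace Y] {v : ℝ → Y}
    (hv : LocallyLipschitz v) (a b : ℝ) :
    ∃ K : ℝ≥0, ∀ p ∈ Icc a b, ∀ q ∈ Icc a b, dist (v p) (v q) ≤ K * |p - q| := by
  have H : ∀ x : ℝ, ∃ (K : ℝ≥0) (ε : ℝ), 0 < ε ∧ LipschitzOnWith K v (ball x ε) := by
    intro x
    obtain ⟨K, t, ht, hl⟩ := hv x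
    obtain ⟨ε, hε, hsub⟩ := Metric.mem_nhds_iff.1 ht
    exact ⟨K, ε, hε, hl.mono hsub⟩
  choose K ε hε hlip using H
  obtain ⟨s, hs⟩ := (isCompact_Icc (a := a) (b := b)).elim_finite_subcover
    (fun x => ball x (ε x / 2)) (fun x => isOpen_ball)
    (fun x _ => mem_iUnion.2 ⟨x, mem_ball_self (half_pos (hε x))⟩)
  have hne : (insert a s).Nonempty := Finset.insert_nonempty _ _
  set s' : Finset ℝ := insert a s with hs'
  set δ : ℝ := s'.inf' hne (fun x => ε x / 2) with hδdef
  have hδ : 0 < δ := by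
    rw [hδdef, Finset.lt_inf'_iff]
    exact fun x _ => half_pos (hε x)
  set K0 : ℝ≥0 := s'.sup' hne K with hK0
  have key : ∀ p ∈ Icc a b, ∀ q : ℝ, |p - q| ≤ δ → dist (v p) (v q) ≤ K0 * |p - q| := by
    intro p hp q hpq
    obtain ⟨x, hxs, hpx⟩ := mem_iUnion₂.1 (hs hp)
    have hx' : x ∈ s' := Finset.mem_insert_of_mem hxs
    have hδx : δ ≤ ε x / 2 := Finset.inf'_le _ hx'
    have hp' : p ∈ ball x (ε x) := by
      rw [mem_ball] at hpx ⊢; linarith [hε x]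
    have hq' : q ∈ ball x (ε x) := by
      rw [mem_ball] at hpx ⊢
      have : dist q x ≤ dist q p + dist p x := dist_triangle _ _ _
      have hqp : dist q p ≤ δ := by rw [Real.dist_eq, abs_sub_comm]; exact hpq
      linarith
    have h1 := (hlip x).dist_le_mul p hp' q hq'
    have h2 : (K x : ℝ) ≤ K0 := by exact_mod_cast Finset.le_sup' K hx'
    rw [Real.dist_eq] at h1
    calc dist (v p) (v q) ≤ K x * |p - q| := h1
      _ ≤ K0 * |p - q| := by gcongr
  have main : ∀ n : ℕ, ∀ p q : ℝ, p ∈ Icc a b → q ∈ Icc a b → p ≤ q → q - p ≤ n * δ →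
      dist (v p) (v q) ≤ K0 * (q - p) := by
    intro n
    induction n with
    | zero =>
      intro p q hp hq hpq hle
      simp only [Nat.cast_zero, zero_mul] at hle
      have : p = q := le_antisymm hpq (by linarith)
      subst this
      simp
    | succ n ih =>
      intro p q hp hq hpq hle
      by_cases h : q - p ≤ δ
      · have := key p hp q (by rw [abs_sub_comm, abs_of_nonneg (by linarith)]; exact h)
        rwa [abs_sub_comm, abs_of_nonneg (by linarith)] at this
      · push_neg at h
        have hm : q - δ ∈ Icc a b := ⟨le_trans hp.1 (by linarith), by linarith [hq.2]⟩
        have h1 : dist (v p) (v (q - δ)) ≤ K0 * ((q - δ) - p) :=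
          ih p (q - δ) hp hm (by linarith) (by push_cast at hle ⊢; linarith)
        have h2 : dist (v q) (v (q - δ)) ≤ K0 * δ := by
          have := key q hq (q - δ) (by rw [show q - (q - δ) = δ by ring, abs_of_nonneg hδ.le])
          simpa [abs_of_nonneg hδ.le] using this
        calc dist (v p) (v q) ≤ dist (v p) (v (q - δ)) + dist (v (q - δ)) (v q) :=
              dist_triangle _ _ _
          _ ≤ K0 * ((q - δ) - p) + K0 * δ := by rw [dist_comm (v (q-δ))]; exact add_le_add h1 h2
          _ = K0 * (q - p) := by ring
  have main' : ∀ p q : ℝ, p ∈ Icc a b → q ∈ Icc a b → p ≤ q →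
      dist (v p) (v q) ≤ K0 * (q - p) := by
    intro p q hp hq hpq
    obtain ⟨n, hn⟩ := exists_nat_ge ((q - p) / δ)
    exact main n p q hp hq hpq (by rw [div_le_iff₀ hδ] at hn; linarith)
  refine ⟨K0, fun p hp q hq => ?_⟩
  rcases le_total p q with h | h
  · rw [abs_sub_comm, abs_of_nonneg (by linarith)]; exact main' p q hp hq h
  · rw [abs_of_nonneg (by linarith), dist_comm]; exact main' q p hq hp h

/-- The lower local Lipschitz constant
`lip f (x) = liminf_{r→0⁺} sup_{y ∈ B(x,r)} d(f x, f y) / r`, valued in `[0,∞]`. -/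
noncomputable def lowerLip {X Y : Type*} [MetricSpace X] [MetricSpace Y]
    (f : X → Y) (x : X) : ℝ≥0∞ :=
  liminf (fun r : ℝ => (⨆ y ∈ ball x r, edist (f x) (f y)) / ENNReal.ofReal r)
    (nhdsWithin 0 (Ioi 0))

/-- Key pointwise bound: the derivative of a function controlled by `f ∘ Γ` along a
1-Lipschitz curve `Γ` is bounded by `lowerLip f` at the corresponding point. -/
lemma aux_key {X Y : Type*} [MetricSpace X] [MetricSpace Y] (f : X → Y) (Γ : ℝ → X)
    (hΓ : ∀ s t : ℝ, dist (Γ s) (Γ t) ≤ |s - t|)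
    (u : ℝ → ℝ) (hu : ∀ s t : ℝ, |u s - u t| ≤ dist (f (Γ s)) (f (Γ t)))
    (t c : ℝ) (hd : HasDerivAt u c t) :
    ENNReal.ofReal |c| ≤ lowerLip f (Γ t) := by
  have hstep : ∀ δ : ℝ, 0 < δ → δ < 1 →
      ENNReal.ofReal ((1 - δ) * |c|) ≤ lowerLip f (Γ t) := by
    intro δ hδ0 hδ1
    have hmono : ∀ᶠ r in nhdsWithin (0:ℝ) (Ioi 0),
        ENNReal.ofReal ((1 - δ) * |slope u t (t + (1 - δ) * r)|)
          ≤ (⨆ y ∈ ball (Γ t) r, edist (f (Γ t)) (f y)) / ENNReal.ofReal r := by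
      filter_upwards [self_mem_nhdsWithin] with r hr
      rw [mem_Ioi] at hr
      have hx : Γ (t + (1 - δ) * r) ∈ ball (Γ t) r := by
        rw [mem_ball, dist_comm]
        calc dist (Γ t) (Γ (t + (1 - δ) * r)) ≤ |t - (t + (1 - δ) * r)| := hΓ _ _
          _ = (1 - δ) * r := by
              rw [show t - (t + (1 - δ) * r) = -((1 - δ) * r) by ring, abs_neg,
                abs_of_nonneg (by nlinarith)]
          _ < r := by nlinarith
      have h1 : ENNReal.ofReal ((1 - δ) * |slope u t (t + (1 - δ) * r)|)
          = ENNReal.ofReal (|u (t + (1 - δ) * r) - u t| / r) := by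
        congr 1
        have h1δ : (1:ℝ) - δ ≠ 0 := by linarith
        rw [slope_def_field, show t + (1 - δ) * r - t = (1 - δ) * r by ring, abs_div,
          abs_of_nonneg (by nlinarith : (0:ℝ) ≤ (1 - δ) * r), mul_div_assoc',
          mul_div_mul_left _ _ h1δ]
      rw [h1, ENNReal.ofReal_div_of_pos hr]
      apply ENNReal.div_le_div_right
      calc ENNReal.ofReal |u (t + (1 - δ) * r) - u t|
          ≤ edist (f (Γ t)) (f (Γ (t + (1 - δ) * r))) := by
            rw [edist_dist]
            exact ENNReal.ofReal_le_ofReal (by rw [dist_comm]; exact hu _ _)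
        _ ≤ ⨆ y ∈ ball (Γ t) r, edist (f (Γ t)) (f y) := by
            exact le_iSup₂ (f := fun y (_ : y ∈ ball (Γ t) r) => edist (f (Γ t)) (f y)) _ hx
    have hmap : Tendsto (fun r : ℝ => t + (1 - δ) * r) (nhdsWithin 0 (Ioi 0)) (𝓝[≠] t) := by
      apply tendsto_nhdsWithin_of_tendsto_nhds_of_eventually_within
      · have : Tendsto (fun r : ℝ => t + (1 - δ) * r) (𝓝 0) (𝓝 (t + (1 - δ) * 0)) :=
          (continuous_const.add (continuous_const.mul continuous_id)).tendsto 0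
        simpa using this.mono_left nhdsWithin_le_nhds
      · filter_upwards [self_mem_nhdsWithin] with r hr
        rw [mem_Ioi] at hr
        simp only [mem_compl_iff, mem_singleton_iff]
        nlinarith
    have hsl : Tendsto (slope u t) (𝓝[≠] t) (𝓝 c) := hasDerivAt_iff_tendsto_slope.1 hd
    have hlimR : Tendsto (fun r : ℝ => (1 - δ) * |slope u t (t + (1 - δ) * r)|)
        (nhdsWithin 0 (Ioi 0)) (𝓝 ((1 - δ) * |c|)) :=
      ((hsl.comp hmap).abs).const_mul (1 - δ)
    have hlim : Tendsto (fun r : ℝ => ENNReal.ofReal ((1 - δ) * |slope u t (t + (1 - δ) * r)|))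
        (nhdsWithin 0 (Ioi 0)) (𝓝 (ENNReal.ofReal ((1 - δ) * |c|))) :=
      (ENNReal.continuous_ofReal.tendsto _).comp hlimR
    calc ENNReal.ofReal ((1 - δ) * |c|)
        = liminf (fun r : ℝ => ENNReal.ofReal ((1 - δ) * |slope u t (t + (1 - δ) * r)|))
            (nhdsWithin 0 (Ioi 0)) := hlim.liminf_eq.symm
      _ ≤ lowerLip f (Γ t) := liminf_le_liminf hmono
  have hone : Tendsto (fun n : ℕ => (1:ℝ) / (n + 2)) atTop (𝓝 0) := by
    have := (tendsto_one_div_add_atTop_nhds_zero_nat (𝕜 := ℝ)).comp (tendsto_add_atTop_nat 1)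
    convert this using 2 with n
    simp [Function.comp]
    ring
  have htd : Tendsto (fun n : ℕ => ENNReal.ofReal ((1 - 1 / (n + 2)) * |c|)) atTop
      (𝓝 (ENNReal.ofReal |c|)) := by
    have : Tendsto (fun n : ℕ => (1 - 1 / ((n:ℝ) + 2)) * |c|) atTop (𝓝 ((1 - 0) * |c|)) :=
      (tendsto_const_nhds.sub hone).mul_const _
    simpa [Function.comp_def] using (ENNReal.continuous_ofReal.tendsto _).comp this
  refine le_of_tendsto' htd fun n => ?_
  refine hstep _ (by positivity) ?_
  rw [div_lt_one (by positivity)]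
  linarith [Nat.cast_nonneg (α := ℝ) n]

/-- If `f : X → Y` is locally Lipschitz, then `lip f` is an upper gradient of `f`:
for every rectifiable curve `γ` parameterized by arc length on `[0, L]`,
`d(f (γ 0), f (γ L)) ≤ ∫_γ lip f ds`. -/
theorem stmt_8 {X Y : Type*} [MetricSpace X] [MetricSpace Y]
    [MeasurableSpace X] [BorelSpace X]
    (f : X → Y) (hf : LocallyLipschitz f)
    (L : ℝ) (hL : 0 ≤ L) (γ : ℝ → X)
    (hγ : ∀ s ∈ Icc 0 L, ∀ t ∈ Icc 0 L, dist (γ s) (γ t) ≤ |s - t|) :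
    edist (f (γ 0)) (f (γ L)) ≤ ∫⁻ t in Icc 0 L, lowerLip f (γ t) := by
  classical
  -- the clamp function
  set c : ℝ → ℝ := fun t => min (max t 0) L with hcdef
  have hcIcc : ∀ t, c t ∈ Icc 0 L := fun t =>
    ⟨le_min (le_max_right _ _) hL, min_le_right _ _⟩
  have hcid : ∀ t ∈ Icc 0 L, c t = t := by
    intro t ht
    simp [hcdef, max_eq_left ht.1, min_eq_left ht.2]
  have hc0 : c 0 = 0 := hcid 0 ⟨le_refl _, hL⟩
  have hcL : c L = L := hcid L ⟨hL, le_refl _⟩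
  have hclip : ∀ s t : ℝ, |c s - c t| ≤ |s - t| := by
    intro s t
    calc |c s - c t| ≤ max |max s 0 - max t 0| |L - L| := abs_min_sub_min_le_max _ _ _ _
      _ = |max s 0 - max t 0| := by simp
      _ ≤ |s - t| := abs_max_sub_max_le_abs _ _ _
  set Γ : ℝ → X := fun t => γ (c t) with hΓdef
  have hΓ : ∀ s t : ℝ, dist (Γ s) (Γ t) ≤ |s - t| :=
    fun s t => le_trans (hγ _ (hcIcc s) _ (hcIcc t)) (hclip s t)
  have hΓlip : LipschitzWith 1 Γ :=
    LipschitzWith.of_dist_le_mul (fun s t => by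
      rw [Real.dist_eq, NNReal.coe_one, one_mul]; exact hΓ s t)
  have hΓc : ∀ t, Γ (c t) = Γ t := by
    intro t; simp only [hΓdef]; rw [hcid _ (hcIcc t)]
  have hv : LocallyLipschitz (f ∘ Γ) := hf.comp hΓlip.locallyLipschitz
  obtain ⟨K, hK⟩ := aux_locLip hv 0 L
  have hvK : ∀ s t : ℝ, dist (f (Γ s)) (f (Γ t)) ≤ K * |s - t| := by
    intro s t
    calc dist (f (Γ s)) (f (Γ t)) = dist ((f ∘ Γ) (c s)) ((f ∘ Γ) (c t)) := by
          simp only [Function.comp_apply, hΓc]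
      _ ≤ K * |c s - c t| := hK _ (hcIcc s) _ (hcIcc t)
      _ ≤ K * |s - t| := by
          have := hclip s t
          have hK0 : (0:ℝ) ≤ K := K.coe_nonneg
          nlinarith
  set u : ℝ → ℝ := fun t => dist (f (γ 0)) (f (Γ t)) with hudef
  have hu : ∀ s t : ℝ, |u s - u t| ≤ dist (f (Γ s)) (f (Γ t)) := by
    intro s t
    simp only [hudef, dist_comm (f (γ 0))]
    exact abs_dist_sub_le _ _ _
  have hulip : LipschitzWith K u :=
    LipschitzWith.of_dist_le_mul (fun s t => by
      rw [Real.dist_eq, Real.dist_eq]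
      exact (hu s t).trans (hvK s t))
  have hucont : Continuous u := hulip.continuous
  have hdiff : ∀ᵐ t : ℝ, DifferentiableAt ℝ u t := hulip.ae_differentiableAt
  set μ : Measure ℝ := volume.restrict (Icc 0 L) with hμdef
  -- difference quotients
  set hseq : ℕ → ℝ := fun n => 1 / (n + 1) with hhdef
  have hhpos : ∀ n, 0 < hseq n := fun n => by positivity
  have hh0 : Tendsto hseq atTop (𝓝 0) := tendsto_one_div_add_atTop_nhds_zero_nat
  set F : ℕ → ℝ → ℝ := fun n t => (u (t + hseq n) - u t) / hseq n with hFdef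
  -- dominated convergence
  have hFtend : Tendsto (fun n => ∫ t, F n t ∂μ) atTop (𝓝 (∫ t, deriv u t ∂μ)) := by
    apply tendsto_integral_of_dominated_convergence (fun _ => (K : ℝ))
    · intro n
      exact (((hucont.comp (continuous_id.add continuous_const)).sub hucont).div_const
        _).aestronglyMeasurable
    · exact integrable_const _
    · intro n
      refine Eventually.of_forall fun t => ?_
      have h1 : dist (u (t + hseq n)) (u t) ≤ K * dist (t + hseq n) t := hulip.dist_le_mul _ _
      rw [Real.dist_eq, Real.dist_eq, show t + hseq n - t = hseq n by ring,
        abs_of_pos (hhpos n)] at h1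
      rw [Real.norm_eq_abs, hFdef, abs_div, abs_of_pos (hhpos n), div_le_iff₀ (hhpos n)]
      exact h1
    · apply ae_restrict_of_ae
      filter_upwards [hdiff] with t ht
      have hsl : Tendsto (slope u t) (𝓝[≠] t) (𝓝 (deriv u t)) :=
        hasDerivAt_iff_tendsto_slope.1 ht.hasDerivAt
      have hmap : Tendsto (fun n => t + hseq n) atTop (𝓝[≠] t) := by
        apply tendsto_nhdsWithin_of_tendsto_nhds_of_eventually_within
        · have := (tendsto_const_nhds (x := t) (f := (atTop : Filter ℕ))).add hh0
          simpa using this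
        · exact Eventually.of_forall fun n => by
            simp only [mem_compl_iff, mem_singleton_iff]
            have := hhpos n; intro h; nlinarith [congrArg (· - t) h]
      have := hsl.comp hmap
      convert this using 2 with n
      simp only [Function.comp_apply, slope_def_field, hFdef]
      rw [show t + hseq n - t = hseq n by ring]
  -- the other limit via FTC-1
  set Φ : ℝ → ℝ := fun x => ∫ s in (0:ℝ)..x, u s with hΦdef
  have hΦd : ∀ x : ℝ, HasDerivAt Φ (u x) x := by
    intro x
    exact intervalIntegral.integral_hasDerivAt_right
      (hucont.intervalIntegrable _ _)
      (hucont.stronglyMeasurable.stronglyMeasurableAtFilter)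
      hucont.continuousAt
  have hident : ∀ n, ∫ t, F n t ∂μ
      = (Φ (L + hseq n) - Φ L) / hseq n - (Φ (0 + hseq n) - Φ 0) / hseq n := by
    intro n
    have hint1 : IntervalIntegrable (fun t => u (t + hseq n)) volume 0 L :=
      (hucont.comp (continuous_id.add continuous_const)).intervalIntegrable _ _
    have hint2 : IntervalIntegrable u volume 0 L := hucont.intervalIntegrable _ _
    have e1 : ∫ t, F n t ∂μ = ∫ t in (0:ℝ)..L, F n t := by
      rw [hμdef, intervalIntegral.integral_of_le hL, integral_Icc_eq_integral_Ioc]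
    rw [e1]
    have e2 : ∫ t in (0:ℝ)..L, F n t
        = ((∫ t in (0:ℝ)..L, u (t + hseq n)) - ∫ t in (0:ℝ)..L, u t) / hseq n := by
      rw [intervalIntegral.integral_div, intervalIntegral.integral_sub hint1 hint2]
    rw [e2, intervalIntegral.integral_comp_add_right u (hseq n)]
    have chasles : (∫ t in (0:ℝ)..(hseq n), u t) + ∫ t in (hseq n)..(L + hseq n), u t
        = ∫ t in (0:ℝ)..(L + hseq n), u t :=
      intervalIntegral.integral_add_adjacent_intervals
        (hucont.intervalIntegrable _ _) (hucont.intervalIntegrable _ _)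
    simp only [hΦdef, zero_add, intervalIntegral.integral_same, sub_zero]
    have hch : ∫ t in (hseq n)..(L + hseq n), u t
        = (∫ t in (0:ℝ)..(L + hseq n), u t) - ∫ t in (0:ℝ)..(hseq n), u t := by
      linarith [chasles]
    rw [hch]
    ring
  have hFtend2 : Tendsto (fun n => ∫ t, F n t ∂μ) atTop (𝓝 (u L - u 0)) := by
    have hL' : Tendsto (fun n => (Φ (L + hseq n) - Φ L) / hseq n) atTop (𝓝 (u L)) := by
      have hsl : Tendsto (slope Φ L) (𝓝[≠] L) (𝓝 (u L)) :=
        hasDerivAt_iff_tendsto_slope.1 (hΦd L)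
      have hmap : Tendsto (fun n => L + hseq n) atTop (𝓝[≠] L) := by
        apply tendsto_nhdsWithin_of_tendsto_nhds_of_eventually_within
        · have := (tendsto_const_nhds (x := L) (f := (atTop : Filter ℕ))).add hh0
          simpa using this
        · exact Eventually.of_forall fun n => by
            simp only [mem_compl_iff, mem_singleton_iff]
            have := hhpos n; intro h; nlinarith [congrArg (· - L) h]
      have := hsl.comp hmap
      convert this using 2 with n
      simp only [Function.comp_apply, slope_def_field]
      rw [show L + hseq n - L = hseq n by ring]
    have h0' : Tendsto (fun n => (Φ (0 + hseq n) - Φ 0) / hseq n) atTop (𝓝 (u 0)) := by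
      have hsl : Tendsto (slope Φ 0) (𝓝[≠] (0:ℝ)) (𝓝 (u 0)) :=
        hasDerivAt_iff_tendsto_slope.1 (hΦd 0)
      have hmap : Tendsto (fun n => (0:ℝ) + hseq n) atTop (𝓝[≠] (0:ℝ)) := by
        apply tendsto_nhdsWithin_of_tendsto_nhds_of_eventually_within
        · simpa using hh0
        · exact Eventually.of_forall fun n => by
            simp only [mem_compl_iff, mem_singleton_iff]
            have := hhpos n; intro h; nlinarith [congrArg (· - (0:ℝ)) h]
      have := hsl.comp hmap
      convert this using 2 with n
      simp only [Function.comp_apply, slope_def_field]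
      rw [show (0:ℝ) + hseq n - 0 = hseq n by ring]
    have := hL'.sub h0'
    apply Tendsto.congr (fun n => (hident n).symm) this
  have huniq : u L - u 0 = ∫ t, deriv u t ∂μ := tendsto_nhds_unique hFtend2 hFtend
  -- a.e. bound
  have hae : ∀ᵐ t ∂μ, (‖deriv u t‖₊ : ℝ≥0∞) ≤ lowerLip f (γ t) := by
    filter_upwards [ae_restrict_of_ae hdiff, ae_restrict_mem measurableSet_Icc] with t hdt htIcc
    have hk := aux_key f Γ hΓ u hu t (deriv u t) hdt.hasDerivAt
    rw [← enorm_eq_nnnorm, Real.enorm_eq_ofReal_abs]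
    rwa [show Γ t = γ t by simp only [hΓdef]; rw [hcid t htIcc]] at hk
  -- final chain
  have hu0 : u 0 = 0 := by simp [hudef, hΓdef, hc0]
  have huL : u L = dist (f (γ 0)) (f (γ L)) := by simp [hudef, hΓdef, hcL]
  calc edist (f (γ 0)) (f (γ L)) = ENNReal.ofReal (u L - u 0) := by
        rw [edist_dist, hu0, huL, sub_zero]
    _ = ENNReal.ofReal (∫ t, deriv u t ∂μ) := by rw [huniq]
    _ ≤ (‖∫ t, deriv u t ∂μ‖₊ : ℝ≥0∞) := Real.ofReal_le_enorm _
    _ ≤ ∫⁻ t, (‖deriv u t‖₊ : ℝ≥0∞) ∂μ := enorm_integral_le_lintegral_enorm _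
    _ ≤ ∫⁻ t in Icc 0 L, lowerLip f (γ t) := lintegral_mono_ae hae
end

section
/- Let X be a doubling metric space. Then X is complete if and only if X is proper (closed bounded subsets are compact). -/
open Metric Set

/-- A doubling metric space (every ball of radius `r` is covered by at most `n` balls of
radius `r/2`) is complete if and only if it is proper. -/
theorem stmt_13 {X : Type*} [MetricSpace X]
    (hdbl : ∃ n : ℕ, ∀ (x : X) (r : ℝ), 0 < r →
      ∃ s : Finset X, s.card ≤ n ∧ ball x r ⊆ ⋃ y ∈ s, ball y (r / 2)) :
    CompleteSpace X ↔ ProperSpace X := by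
  classical
  constructor
  · intro hc
    obtain ⟨n, hn⟩ := hdbl
    have key : ∀ (x : X) (r : ℝ), 0 < r → ∀ k : ℕ,
        ∃ s : Finset X, ball x r ⊆ ⋃ y ∈ s, ball y (r / 2 ^ k) := by
      intro x r hr k
      induction k with
      | zero => exact ⟨{x}, by simp⟩
      | succ k ih =>
        obtain ⟨s, hs⟩ := ih
        have hrk : 0 < r / 2 ^ k := by positivity
        choose t ht using fun y : X => hn y (r / 2 ^ k) hrk
        refine ⟨s.biUnion t, ?_⟩
        intro z hz
        have hz' := hs hz
        simp only [mem_iUnion, exists_prop] at hz' ⊢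
        obtain ⟨y, hy, hzy⟩ := hz'
        have h2 := (ht y).2 hzy
        simp only [mem_iUnion, exists_prop] at h2
        obtain ⟨w, hw, hzw⟩ := h2
        refine ⟨w, Finset.mem_biUnion.2 ⟨y, hy, hw⟩, ?_⟩
        have : r / 2 ^ k / 2 = r / 2 ^ (k + 1) := by ring
        rwa [this] at hzw
    have tb : ∀ (x : X) (r : ℝ), TotallyBounded (ball x r) := by
      intro x r
      rcases le_or_gt r 0 with h | h
      · simp [ball_eq_empty.2 h]
      · rw [Metric.totallyBounded_iff]
        intro ε hε
        obtain ⟨k, hk⟩ : ∃ k : ℕ, r / ε < 2 ^ k := pow_unbounded_of_one_lt _ one_lt_two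
        have hk' : r / 2 ^ k < ε := by
          rw [div_lt_iff₀ (by positivity)]
          rw [div_lt_iff₀ hε] at hk
          linarith [hk]
        obtain ⟨s, hs⟩ := key x r h k
        refine ⟨↑s, s.finite_toSet, hs.trans ?_⟩
        exact iUnion₂_mono fun y _ => ball_subset_ball hk'.le
    refine ⟨fun x r => ?_⟩
    rcases le_or_gt r 0 with h | h
    · rcases lt_or_eq_of_le h with h' | h'
      · simp [closedBall_eq_empty.2 h']
      · subst h'; simp [closedBall_zero]
    · have hsub : closedBall x r ⊆ ball x (r + 1) :=
        closedBall_subset_ball (by linarith)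
      exact TotallyBounded.isCompact_of_isClosed
        ((tb x (r + 1)).subset hsub) isClosed_closedBall
  · intro hp
    exact inferInstance
end
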